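/- Let R be a commutative ring, n ≥ 2, G an abelian group, and φ : Um_n(R) → G a map satisfying MS1 (φ(vε) = φ(v) for every ε ∈ E_n(R) and v ∈ Um_n(R)) and MS4 (φ(f², a₂,…,aₙ)·φ(g, a₂,…,aₙ) = φ(f²g, a₂,…,aₙ) whenever all rows involved are unimodular). Then φ satisfies MS3 (φ(x, a₂,…,aₙ)·φ(y, a₂,…,aₙ) = φ(xy, a₂,…,aₙ) whenever x + y = 1 and all rows involved are unimodular) if and only if φ satisfies MS5 (φ(r, a₂,…,aₙ)·φ(1+q, a₂,…,aₙ) = φ(q, a₂,…,aₙ) whenever r(1+q) ≡ q mod (a₂,…,aₙ) and all rows involved are unimodular). -/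

import Mathlib

/-- A row `v` of length `n` over a commutative ring is *unimodular* if there is a row `w`
with `∑ i, v i * w i = 1`. -/
def IsUnimodular {R : Type*} [CommRing R] {n : ℕ} (v : Fin n → R) : Prop :=
  ∃ w : Fin n → R, ∑ i, v i * w i = 1

/-- `ε` lies in the elementary group `E_n(R)`, i.e. the (sub)group of `GL_n(R)` generated by
the elementary matrices `e_{ij}(λ) = I + λ E_{ij}` (`i ≠ j`).  Since the generating set is
closed under inverses, this coincides with the multiplicative closure. -/
def IsElementary {R : Type*} [CommRing R] {n : ℕ} (ε : Matrix (Fin n) (Fin n) R) : Prop :=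
  ε ∈ Submonoid.closure {M : Matrix (Fin n) (Fin n) R |
    ∃ (i j : Fin n) (c : R), i ≠ j ∧ M = Matrix.transvection i j c}

/-- An `m × n` matrix is right invertible (i.e. lies in `Um_{m,n}(R)`) if it has a right
inverse. -/
def RightInvertible {R : Type*} [CommRing R] {m n : ℕ} (A : Matrix (Fin m) (Fin n) R) : Prop :=
  ∃ B : Matrix (Fin n) (Fin m) R, A * B = 1

/-- The stable range condition `sr_k(R)`. -/
def SRCond (R : Type*) [CommRing R] (k : ℕ) : Prop :=
  ∀ a : Fin (k + 1) → R, IsUnimodular a →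
    ∃ c : Fin k → R, IsUnimodular (fun i : Fin k => a i.castSucc + c i * a (Fin.last k))

section MennickeSymbolRelations

variable {R : Type*} [CommRing R] {G : Type*} [CommGroup G] {k : ℕ}

/-- `MS1`: invariance of `φ` under the right action of `E_n(R)` on unimodular rows. -/
def MS1 (φ : (Fin (k + 1) → R) → G) : Prop :=
  ∀ (v : Fin (k + 1) → R) (ε : Matrix (Fin (k + 1)) (Fin (k + 1)) R),
    IsUnimodular v → IsElementary ε → φ (Matrix.vecMul v ε) = φ v

/-- `MS3`: `φ(x,a)·φ(y,a) = φ(xy,a)` whenever `x + y = 1` and all rows involved are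
unimodular. -/
def MS3 (φ : (Fin (k + 1) → R) → G) : Prop :=
  ∀ (x y : R) (a : Fin k → R), x + y = 1 →
    IsUnimodular (Fin.cons x a) → IsUnimodular (Fin.cons y a) →
    IsUnimodular (Fin.cons (x * y) a) →
    φ (Fin.cons x a) * φ (Fin.cons y a) = φ (Fin.cons (x * y) a)

/-- `MS4`: `φ(f²,a)·φ(g,a) = φ(f²g,a)` whenever all rows involved are unimodular. -/
def MS4 (φ : (Fin (k + 1) → R) → G) : Prop :=
  ∀ (f g : R) (a : Fin k → R),
    IsUnimodular (Fin.cons (f ^ 2) a) → IsUnimodular (Fin.cons g a) →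
    IsUnimodular (Fin.cons (f ^ 2 * g) a) →
    φ (Fin.cons (f ^ 2) a) * φ (Fin.cons g a) = φ (Fin.cons (f ^ 2 * g) a)

/-- `MS5`: `φ(r,a)·φ(1+q,a) = φ(q,a)` whenever `r(1+q) ≡ q mod (a₂,…,aₙ)` and all rows
involved are unimodular. -/
def MS5 (φ : (Fin (k + 1) → R) → G) : Prop :=
  ∀ (r q : R) (a : Fin k → R),
    r * (1 + q) - q ∈ Ideal.span (Set.range a) →
    IsUnimodular (Fin.cons r a) → IsUnimodular (Fin.cons (1 + q) a) →
    IsUnimodular (Fin.cons q a) →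
    φ (Fin.cons r a) * φ (Fin.cons (1 + q) a) = φ (Fin.cons q a)

end MennickeSymbolRelations


section AuxLemmas

variable {R : Type*} [CommRing R] {G : Type*} [CommGroup G] {k : ℕ}

private lemma sum_cons_mul (x y : R) (a c : Fin k → R) :
    ∑ i, Fin.cons x a i * Fin.cons y c i = x * y + ∑ i, a i * c i := by
  rw [Fin.sum_univ_succ]
  simp

/-- Unimodularity of `Fin.cons x a` means `x` is a unit modulo the ideal generated by `a`. -/
lemma isUnimodular_cons_iff {x : R} {a : Fin k → R} :
    IsUnimodular (Fin.cons x a) ↔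
      IsUnit (Ideal.Quotient.mk (Ideal.span (Set.range a)) x) := by
  constructor
  · rintro ⟨w, hw⟩
    have hw' : x * w 0 + ∑ i, a i * w i.succ = 1 := by
      rw [← hw, Fin.sum_univ_succ]
      simp
    have hs : (∑ i, a i * w i.succ) ∈ Ideal.span (Set.range a) :=
      Ideal.sum_mem _ fun i _ => Ideal.mul_mem_right _ _ (Ideal.subset_span ⟨i, rfl⟩)
    refine IsUnit.of_mul_eq_one (Ideal.Quotient.mk _ (w 0)) ?_
    rw [← map_mul, show (1 : R ⧸ Ideal.span (Set.range a)) = Ideal.Quotient.mk _ 1 from rfl]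
    refine (Ideal.Quotient.eq).mpr ?_
    have hxw : x * w 0 - 1 = -(∑ i, a i * w i.succ) := by
      rw [← hw']; ring
    rw [hxw]
    exact neg_mem hs
  · intro hu
    obtain ⟨b, hb⟩ := isUnit_iff_exists_inv.mp hu
    obtain ⟨t, rfl⟩ := Ideal.Quotient.mk_surjective b
    have h1 : (1 : R) - x * t ∈ Ideal.span (Set.range a) := by
      have := (Ideal.Quotient.eq).mp (by rw [map_mul, hb, map_one] : Ideal.Quotient.mk
        (Ideal.span (Set.range a)) (x * t) = Ideal.Quotient.mk _ 1)
      simpa using neg_mem this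
    obtain ⟨c, hc⟩ := (Submodule.mem_span_range_iff_exists_fun R).mp h1
    refine ⟨Fin.cons t c, ?_⟩
    rw [sum_cons_mul]
    have : ∑ i, a i * c i = 1 - x * t := by
      rw [← hc]
      exact Finset.sum_congr rfl fun i _ => by rw [smul_eq_mul, mul_comm]
    rw [this]; ring

private lemma vecMul_transvection_cons (x : R) (a : Fin k → R) (i : Fin k) (c : R) :
    Matrix.vecMul (Fin.cons x a) (Matrix.transvection i.succ 0 c) = Fin.cons (x + a i * c) a := by
  have hE : ∀ j : Fin (k + 1), Matrix.vecMul (Fin.cons x a)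
      (Matrix.single i.succ (0 : Fin (k + 1)) c) j = if j = 0 then a i * c else 0 := by
    intro j
    simp only [Matrix.vecMul, dotProduct, Matrix.single, Matrix.of_apply,
      mul_ite, mul_zero, ite_and]
    simp [Finset.sum_ite_eq, eq_comm]
  funext j
  rw [Matrix.transvection, Matrix.vecMul_add, Matrix.vecMul_one]
  refine Fin.cases ?_ ?_ j
  · simp [hE]
  · intro j'
    simp [hE, Fin.succ_ne_zero]

/-- For every coefficient vector `c` there is an elementary matrix adding `∑ aᵢ cᵢ` to the
first entry of a row `(x, a)`. -/
private lemma exists_elementary_shift (c : Fin k → R) :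
    ∃ ε : Matrix (Fin (k + 1)) (Fin (k + 1)) R, IsElementary ε ∧
      ∀ (x : R) (a : Fin k → R),
        Matrix.vecMul (Fin.cons x a) ε = Fin.cons (x + ∑ i, a i * c i) a := by
  suffices h : ∀ s : Finset (Fin k), ∃ ε : Matrix (Fin (k + 1)) (Fin (k + 1)) R,
      IsElementary ε ∧ ∀ (x : R) (a : Fin k → R),
        Matrix.vecMul (Fin.cons x a) ε = Fin.cons (x + ∑ i ∈ s, a i * c i) a from h Finset.univ
  intro s
  induction s using Finset.induction_on with
  | empty =>
    exact ⟨1, Submonoid.one_mem _, fun x a => by simp⟩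
  | @insert i s hi ih =>
    obtain ⟨ε, hε, hmul⟩ := ih
    refine ⟨Matrix.transvection i.succ 0 (c i) * ε, ?_, ?_⟩
    · exact Submonoid.mul_mem _
        (Submonoid.subset_closure ⟨i.succ, 0, c i, Fin.succ_ne_zero i, rfl⟩) hε
    · intro x a
      rw [← Matrix.vecMul_vecMul, vecMul_transvection_cons, hmul, Finset.sum_insert hi,
        ← add_assoc]

/-- Under `MS1`, the value `φ (Fin.cons x a)` depends only on `x` modulo the ideal
generated by `a`. -/
lemma phi_congr {φ : (Fin (k + 1) → R) → G} (h1 : MS1 φ) {x x' : R} {a : Fin k → R}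
    (hx : IsUnimodular (Fin.cons x a)) (h : x' - x ∈ Ideal.span (Set.range a)) :
    φ (Fin.cons x' a) = φ (Fin.cons x a) := by
  obtain ⟨c, hc⟩ := (Submodule.mem_span_range_iff_exists_fun R).mp h
  obtain ⟨ε, hε, hmul⟩ := exists_elementary_shift (R := R) c
  have hsum : ∑ i, a i * c i = x' - x := by
    rw [← hc]
    exact Finset.sum_congr rfl fun i _ => by rw [smul_eq_mul, mul_comm]
  have hx' : x + ∑ i, a i * c i = x' := by rw [hsum]; ring
  calc φ (Fin.cons x' a) = φ (Matrix.vecMul (Fin.cons x a) ε) := by rw [hmul, hx']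
    _ = φ (Fin.cons x a) := h1 _ ε hx hε

end AuxLemmas

/-- Under `MS1` and `MS4`, relations `MS3` and `MS5` are equivalent
(van der Kallen, Lemma 3.1). -/
theorem ms3_iff_ms5 {R : Type*} [CommRing R] {G : Type*} [CommGroup G]
    (k : ℕ) (hk : 1 ≤ k) (φ : (Fin (k + 1) → R) → G)
    (h1 : MS1 φ) (h4 : MS4 φ) : MS3 φ ↔ MS5 φ := by
  constructor
  · -- MS3 → MS5
    intro h3 r q a hI hr h1q hq
    set I := Ideal.span (Set.range a) with hIdef
    have ur : IsUnit (Ideal.Quotient.mk I r) := isUnimodular_cons_iff.mp hr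
    have u1q : IsUnit (Ideal.Quotient.mk I (1 + q)) := isUnimodular_cons_iff.mp h1q
    -- s = 1 - r is a unit mod I since s * (1+q) ≡ 1
    have hs1 : Ideal.Quotient.mk I ((1 - r) * (1 + q)) = 1 := by
      rw [show (1 : R ⧸ I) = Ideal.Quotient.mk I 1 from rfl]
      refine (Ideal.Quotient.eq).mpr ?_
      have : (1 - r) * (1 + q) - 1 = (-1) * (r * (1 + q) - q) := by ring
      rw [this]
      exact Ideal.mul_mem_left _ _ hI
    have us : IsUnit (Ideal.Quotient.mk I (1 - r)) := by
      refine IsUnit.of_mul_eq_one (Ideal.Quotient.mk I (1 + q)) ?_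
      rw [← map_mul, hs1]
    have uq : IsUnit (Ideal.Quotient.mk I q) := isUnimodular_cons_iff.mp hq
    have hs : IsUnimodular (Fin.cons (1 - r) a) := isUnimodular_cons_iff.mpr us
    have hrs : IsUnimodular (Fin.cons (r * (1 - r)) a) :=
      isUnimodular_cons_iff.mpr (by rw [map_mul]; exact ur.mul us)
    have hs2 : IsUnimodular (Fin.cons ((1 - r) ^ 2) a) :=
      isUnimodular_cons_iff.mpr (by rw [map_pow]; exact us.pow 2)
    have hs2q1 : IsUnimodular (Fin.cons ((1 - r) ^ 2 * (1 + q)) a) :=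
      isUnimodular_cons_iff.mpr (by rw [map_mul, map_pow]; exact (us.pow 2).mul u1q)
    have hs2q : IsUnimodular (Fin.cons ((1 - r) ^ 2 * q) a) :=
      isUnimodular_cons_iff.mpr (by rw [map_mul, map_pow]; exact (us.pow 2).mul uq)
    -- MS3 on r + (1-r) = 1
    have e1 : φ (Fin.cons r a) * φ (Fin.cons (1 - r) a) = φ (Fin.cons (r * (1 - r)) a) :=
      h3 r (1 - r) a (by ring) hr hs hrs
    -- MS4 with f = 1-r, g = 1+q
    have e2 : φ (Fin.cons ((1 - r) ^ 2) a) * φ (Fin.cons (1 + q) a)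
        = φ (Fin.cons ((1 - r) ^ 2 * (1 + q)) a) := h4 (1 - r) (1 + q) a hs2 h1q hs2q1
    have e2' : φ (Fin.cons ((1 - r) ^ 2 * (1 + q)) a) = φ (Fin.cons (1 - r) a) := by
      refine phi_congr h1 hs ?_
      have : (1 - r) ^ 2 * (1 + q) - (1 - r) = (-(1 - r)) * (r * (1 + q) - q) := by ring
      rw [this]
      exact Ideal.mul_mem_left _ _ hI
    -- MS4 with f = 1-r, g = q
    have e3 : φ (Fin.cons ((1 - r) ^ 2) a) * φ (Fin.cons q a)
        = φ (Fin.cons ((1 - r) ^ 2 * q) a) := h4 (1 - r) q a hs2 hq hs2q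
    have e3' : φ (Fin.cons ((1 - r) ^ 2 * q) a) = φ (Fin.cons (r * (1 - r)) a) := by
      refine phi_congr h1 hrs ?_
      have : (1 - r) ^ 2 * q - r * (1 - r) = (-(1 - r)) * (r * (1 + q) - q) := by ring
      rw [this]
      exact Ideal.mul_mem_left _ _ hI
    have key : φ (Fin.cons ((1 - r) ^ 2) a) * φ (Fin.cons q a)
        = φ (Fin.cons ((1 - r) ^ 2) a) * (φ (Fin.cons r a) * φ (Fin.cons (1 + q) a)) := by
      calc φ (Fin.cons ((1 - r) ^ 2) a) * φ (Fin.cons q a)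
          = φ (Fin.cons ((1 - r) ^ 2 * q) a) := e3
        _ = φ (Fin.cons (r * (1 - r)) a) := e3'
        _ = φ (Fin.cons r a) * φ (Fin.cons (1 - r) a) := e1.symm
        _ = φ (Fin.cons r a) * (φ (Fin.cons ((1 - r) ^ 2) a) * φ (Fin.cons (1 + q) a)) := by
            rw [e2, e2']
        _ = φ (Fin.cons ((1 - r) ^ 2) a) * (φ (Fin.cons r a) * φ (Fin.cons (1 + q) a)) := by
            rw [mul_left_comm]
    exact (mul_left_cancel key).symm
  · -- MS5 → MS3
    intro h5 x y a hxy hx hy hxyu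
    have hy1 : y = 1 - x := by rw [← hxy]; ring
    subst hy1
    set I := Ideal.span (Set.range a) with hIdef
    have ux : IsUnit (Ideal.Quotient.mk I x) := isUnimodular_cons_iff.mp hx
    have uy : IsUnit (Ideal.Quotient.mk I (1 - x)) := isUnimodular_cons_iff.mp hy
    -- choose t with (1-x)*t ≡ 1 mod I
    obtain ⟨b, hb⟩ := isUnit_iff_exists_inv.mp uy
    obtain ⟨t, rfl⟩ := Ideal.Quotient.mk_surjective b
    have ht : (1 - x) * t - 1 ∈ I := by
      refine (Ideal.Quotient.eq).mp ?_
      rw [map_mul, hb, map_one]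
    have ut : IsUnit (Ideal.Quotient.mk I t) :=
      IsUnit.of_mul_eq_one (Ideal.Quotient.mk I (1 - x)) (by rw [mul_comm, ← map_mul]; exact hb)
    have h1xt : IsUnimodular (Fin.cons (1 + x * t) a) := by
      refine isUnimodular_cons_iff.mpr ?_
      have : Ideal.Quotient.mk I (1 + x * t) = Ideal.Quotient.mk I t := by
        refine (Ideal.Quotient.eq).mpr ?_
        have : 1 + x * t - t = (-1) * ((1 - x) * t - 1) := by ring
        rw [this]
        exact Ideal.mul_mem_left _ _ ht
      rw [this]; exact ut
    have hxt : IsUnimodular (Fin.cons (x * t) a) :=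
      isUnimodular_cons_iff.mpr (by rw [map_mul]; exact ux.mul ut)
    have hy2 : IsUnimodular (Fin.cons ((1 - x) ^ 2) a) :=
      isUnimodular_cons_iff.mpr (by rw [map_pow]; exact uy.pow 2)
    have hy2xt : IsUnimodular (Fin.cons ((1 - x) ^ 2 * (x * t)) a) :=
      isUnimodular_cons_iff.mpr (by rw [map_mul, map_pow, map_mul]
                                    exact (uy.pow 2).mul (ux.mul ut))
    have hy21xt : IsUnimodular (Fin.cons ((1 - x) ^ 2 * (1 + x * t)) a) :=
      isUnimodular_cons_iff.mpr (by
        rw [map_mul, map_pow]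
        exact (uy.pow 2).mul (isUnimodular_cons_iff.mp h1xt))
    -- MS5 with r = x, q = x*t
    have e1 : φ (Fin.cons x a) * φ (Fin.cons (1 + x * t) a) = φ (Fin.cons (x * t) a) := by
      refine h5 x (x * t) a ?_ hx h1xt hxt
      have : x * (1 + x * t) - x * t = (-x) * ((1 - x) * t - 1) := by ring
      rw [this]
      exact Ideal.mul_mem_left _ _ ht
    -- MS4 with f = 1-x, g = x*t
    have e2 : φ (Fin.cons ((1 - x) ^ 2) a) * φ (Fin.cons (x * t) a)
        = φ (Fin.cons ((1 - x) ^ 2 * (x * t)) a) := h4 (1 - x) (x * t) a hy2 hxt hy2xt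
    have e2' : φ (Fin.cons ((1 - x) ^ 2 * (x * t)) a) = φ (Fin.cons (x * (1 - x)) a) := by
      refine phi_congr h1 hxyu ?_
      have : (1 - x) ^ 2 * (x * t) - x * (1 - x) = (x * (1 - x)) * ((1 - x) * t - 1) := by ring
      rw [this]
      exact Ideal.mul_mem_left _ _ ht
    -- MS4 with f = 1-x, g = 1 + x*t
    have e3 : φ (Fin.cons ((1 - x) ^ 2) a) * φ (Fin.cons (1 + x * t) a)
        = φ (Fin.cons ((1 - x) ^ 2 * (1 + x * t)) a) := h4 (1 - x) (1 + x * t) a hy2 h1xt hy21xt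
    have e3' : φ (Fin.cons ((1 - x) ^ 2 * (1 + x * t)) a) = φ (Fin.cons (1 - x) a) := by
      refine phi_congr h1 hy ?_
      have : (1 - x) ^ 2 * (1 + x * t) - (1 - x) = (x * (1 - x)) * ((1 - x) * t - 1) := by ring
      rw [this]
      exact Ideal.mul_mem_left _ _ ht
    calc φ (Fin.cons x a) * φ (Fin.cons (1 - x) a)
        = φ (Fin.cons x a) * (φ (Fin.cons ((1 - x) ^ 2) a) * φ (Fin.cons (1 + x * t) a)) := by
          rw [e3, e3']
      _ = φ (Fin.cons ((1 - x) ^ 2) a) * (φ (Fin.cons x a) * φ (Fin.cons (1 + x * t) a)) := by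
          rw [mul_left_comm]
      _ = φ (Fin.cons ((1 - x) ^ 2) a) * φ (Fin.cons (x * t) a) := by rw [e1]
      _ = φ (Fin.cons ((1 - x) ^ 2 * (x * t)) a) := e2
      _ = φ (Fin.cons (x * (1 - x)) a) := e2'
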